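/- arXiv:1708.08087 — 4 statements merged into one kernel-verified Lean document; each statement's English description precedes it below -/
import Mathlib

section
/- Let a₀¹ ≠ 0, a₁¹ and x₀ be real numbers, and define A(t) = x₀·exp(a₀¹·t) / (1 − (a₁¹/a₀¹)·x₀·(exp(a₀¹·t) − 1)). Then A(0) = x₀, and for every t ≥ 0 at which the denominator 1 − (a₁¹/a₀¹)·x₀·(exp(a₀¹·t) − 1) is nonzero, A is differentiable at t with A'(t) = a₀¹·A(t) + a₁¹·A(t)². -/
/-- Explicit mean trajectory of the affine McKean-Vlasov model:
solution of the Riccati ODE `A' = a₀¹ A + a₁¹ A²`, `A 0 = x₀`. -/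
theorem stmt_7 (a01 a11 x0 : ℝ) (ha01 : a01 ≠ 0) (A : ℝ → ℝ)
    (hA : ∀ t : ℝ, A t = x0 * Real.exp (a01 * t)
      / (1 - (a11 / a01) * x0 * (Real.exp (a01 * t) - 1))) :
    A 0 = x0 ∧ ∀ t : ℝ, 0 ≤ t →
      (1 - (a11 / a01) * x0 * (Real.exp (a01 * t) - 1)) ≠ 0 →
      HasDerivAt A (a01 * A t + a11 * (A t) ^ 2) t := by
  have hAeq : A = fun t => x0 * Real.exp (a01 * t)
      / (1 - (a11 / a01) * x0 * (Real.exp (a01 * t) - 1)) := funext hA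
  subst hAeq
  constructor
  · simp
  · intro t ht hD
    have he : HasDerivAt (fun t => Real.exp (a01 * t)) (a01 * Real.exp (a01 * t)) t := by
      simpa [mul_comm, Function.comp_def] using
        (Real.hasDerivAt_exp (a01 * t)).comp t ((hasDerivAt_id t).const_mul a01)
    have hN : HasDerivAt (fun t => x0 * Real.exp (a01 * t))
        (x0 * (a01 * Real.exp (a01 * t))) t := he.const_mul x0
    have hDd : HasDerivAt (fun t => 1 - (a11 / a01) * x0 * (Real.exp (a01 * t) - 1))
        (-((a11 / a01) * x0 * (a01 * Real.exp (a01 * t)))) t := by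
      simpa using ((he.sub_const 1).const_mul ((a11 / a01) * x0)).const_sub 1
    have h := hN.div hDd hD
    have hD2 : a01 - a11 * x0 * (Real.exp (a01 * t) - 1) ≠ 0 := by
      intro h0
      apply hD
      field_simp
      linarith
    refine h.congr_deriv ?_
    field_simp [hD, hD2]
    ring
end

section
/- Let k be a natural number and g : ℝ → ℝ a continuously differentiable function such that g(u)·e^{−u²/2}·H̄_{k+1}(u) → 0 as u → ±∞, and such that the functions u ↦ g(u)·H̄_k(u)·e^{−u²/2} and u ↦ (g'(u) − u·g(u))·H̄_{k+1}(u)·e^{−u²/2} are Lebesgue integrable on ℝ. Then ∫_ℝ g(u)·H̄_k(u)·e^{−u²/2} du = −(2k+2)^{−1/2} · ∫_ℝ (g'(u) − u·g(u))·H̄_{k+1}(u)·e^{−u²/2} du. -/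
open MeasureTheory Filter

/-- Physicists' Hermite polynomial via the Rodrigues formula:
`H_n(x) = (−1)ⁿ e^{x²} (dⁿ/dxⁿ)(e^{−x²})`. -/
noncomputable def physHermite (n : ℕ) (x : ℝ) : ℝ :=
  (-1) ^ n * Real.exp (x ^ 2) * iteratedDeriv n (fun y => Real.exp (-y ^ 2)) x

/-- Normalized Hermite polynomial `H̄_n = (2ⁿ n! √π)^{−1/2} H_n`. -/
noncomputable def normHermite (n : ℕ) (x : ℝ) : ℝ :=
  ((2 ^ n * n.factorial * Real.sqrt Real.pi : ℝ) ^ (-(1 / 2) : ℝ)) * physHermite n x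

lemma derivative_hermite (n : ℕ) :
    Polynomial.derivative (Polynomial.hermite (n + 1)) = (n + 1 : ℤ) • Polynomial.hermite n := by
  induction n with
  | zero => simp [Polynomial.hermite_one, Polynomial.hermite_zero]
  | succ n ih =>
    have hd : Polynomial.derivative (Polynomial.hermite n)
        = Polynomial.X * Polynomial.hermite n - Polynomial.hermite (n + 1) := by
      rw [Polynomial.hermite_succ n]; ring
    rw [Polynomial.hermite_succ (n + 1), Polynomial.derivative_sub, Polynomial.derivative_mul,
      Polynomial.derivative_X, one_mul, ih, Polynomial.derivative_smul, hd]
    simp only [zsmul_eq_mul]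
    push_cast
    ring

lemma gauss_contDiff : ContDiff ℝ ⊤ (fun y : ℝ => Real.exp (-(y ^ 2 / 2))) :=
  Real.contDiff_exp.comp (((contDiff_id.pow 2).div_const 2).neg)

lemma physHermite_eq (n : ℕ) (x : ℝ) :
    physHermite n x
      = (Real.sqrt 2) ^ n * Polynomial.aeval (Real.sqrt 2 * x) (Polynomial.hermite n) := by
  have h2 : (Real.sqrt 2) ^ 2 = 2 := Real.sq_sqrt (by norm_num)
  have hfun : (fun y : ℝ => Real.exp (-y ^ 2))
      = fun y => (fun z : ℝ => Real.exp (-(z ^ 2 / 2))) (Real.sqrt 2 * y) := by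
    funext y
    simp only [mul_pow, h2]
    ring_nf
  have he : Real.exp (-((Real.sqrt 2 * x) ^ 2 / 2)) = Real.exp (-x ^ 2) := by
    rw [mul_pow, h2]; ring_nf
  have hex : Real.exp (x ^ 2) * Real.exp (-x ^ 2) = 1 := by
    rw [← Real.exp_add]; simp
  have hsign : ((-1 : ℝ) ^ n) * ((-1 : ℝ) ^ n) = 1 := by
    rw [← pow_add]; exact Even.neg_one_pow ⟨n, rfl⟩
  unfold physHermite
  rw [hfun, iteratedDeriv_comp_const_mul (gauss_contDiff.of_le le_top) (Real.sqrt 2)]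
  beta_reduce
  rw [iteratedDeriv_eq_iterate, Polynomial.deriv_gaussian_eq_hermite_mul_gaussian, he]
  set A := Polynomial.aeval (Real.sqrt 2 * x) (Polynomial.hermite n) with hA
  linear_combination (Real.sqrt 2 ^ n * A * ((-1 : ℝ) ^ n * (-1) ^ n)) * hex
    + (Real.sqrt 2 ^ n * A) * hsign

lemma hasDerivAt_physHermite (n : ℕ) (x : ℝ) :
    HasDerivAt (physHermite (n + 1)) ((2 * n + 2) * physHermite n x) x := by
  have h2 : Real.sqrt 2 ^ 2 = 2 := Real.sq_sqrt (by norm_num)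
  have key : HasDerivAt (fun y : ℝ => Polynomial.aeval (Real.sqrt 2 * y)
      (Polynomial.hermite (n + 1) : Polynomial ℤ))
      (Real.sqrt 2 * ((n + 1 : ℝ) * Polynomial.aeval (Real.sqrt 2 * x) (Polynomial.hermite n)))
      x := by
    have hpoly := (Polynomial.hermite (n + 1)).hasDerivAt_aeval (R := ℤ) (Real.sqrt 2 * x)
    rw [derivative_hermite, map_zsmul] at hpoly
    have hlin : HasDerivAt (fun y : ℝ => Real.sqrt 2 * y) (Real.sqrt 2) x := by
      simpa using (hasDerivAt_id x).const_mul (Real.sqrt 2)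
    have := hpoly.comp x hlin
    simp only [zsmul_eq_mul] at this
    refine this.congr_deriv ?_
    push_cast
    ring
  have h := key.const_mul ((Real.sqrt 2) ^ (n + 1))
  have heq : (fun y => (Real.sqrt 2) ^ (n + 1) * Polynomial.aeval (Real.sqrt 2 * y)
      (Polynomial.hermite (n + 1))) = physHermite (n + 1) := by
    funext y; rw [physHermite_eq]
  rw [heq] at h
  refine h.congr_deriv ?_
  rw [physHermite_eq, pow_succ]
  set A := Polynomial.aeval (Real.sqrt 2 * x) (Polynomial.hermite n) with hA
  linear_combination (Real.sqrt 2 ^ n * A * ((n : ℝ) + 1)) * h2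

lemma norm_const_eq (k : ℕ) :
    ((2 ^ (k + 1) * (k + 1).factorial * Real.sqrt Real.pi : ℝ) ^ (-(1 / 2) : ℝ)) * (2 * k + 2)
      = Real.sqrt (2 * k + 2)
        * ((2 ^ k * k.factorial * Real.sqrt Real.pi : ℝ) ^ (-(1 / 2) : ℝ)) := by
  have ha : (0 : ℝ) < 2 ^ k * k.factorial * Real.sqrt Real.pi := by
    have := Real.sqrt_pos.mpr Real.pi_pos
    positivity
  have hb : (0 : ℝ) < 2 * k + 2 := by positivity
  have hfac : (2 ^ (k + 1) * (k + 1).factorial * Real.sqrt Real.pi : ℝ)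
      = (2 * k + 2) * (2 ^ k * k.factorial * Real.sqrt Real.pi) := by
    push_cast [Nat.factorial_succ, pow_succ]
    ring
  have hbb : (2 * (k : ℝ) + 2) ^ (-(1 / 2) : ℝ) * (2 * k + 2) = (2 * (k : ℝ) + 2) ^ ((1 / 2) : ℝ) := by
    nth_rewrite 2 [← Real.rpow_one (2 * (k : ℝ) + 2)]
    rw [← Real.rpow_add hb]
    norm_num
  rw [hfac, Real.mul_rpow hb.le ha.le,
    show Real.sqrt (2 * (k:ℝ) + 2) = (2 * (k:ℝ) + 2) ^ ((1/2 : ℝ)) from Real.sqrt_eq_rpow _]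
  linear_combination ((2 ^ k * k.factorial * Real.sqrt Real.pi : ℝ) ^ (-(1 / 2) : ℝ)) * hbb

lemma hasDerivAt_normHermite (k : ℕ) (x : ℝ) :
    HasDerivAt (normHermite (k + 1)) (Real.sqrt (2 * k + 2) * normHermite k x) x := by
  have h := (hasDerivAt_physHermite k x).const_mul
    ((2 ^ (k + 1) * (k + 1).factorial * Real.sqrt Real.pi : ℝ) ^ (-(1 / 2) : ℝ))
  have heq : (fun y => ((2 ^ (k + 1) * (k + 1).factorial * Real.sqrt Real.pi : ℝ)
      ^ (-(1 / 2) : ℝ)) * physHermite (k + 1) y) = normHermite (k + 1) := by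
    funext y; rfl
  rw [heq] at h
  refine h.congr_deriv ?_
  unfold normHermite
  linear_combination (physHermite k x) * (norm_const_eq k)

/-- Hermite integration-by-parts identity:
`∫ g H̄_k e^{−u²/2} = −(2k+2)^{−1/2} ∫ (g' − u g) H̄_{k+1} e^{−u²/2}`. -/
theorem stmt_9 (k : ℕ) (g : ℝ → ℝ) (hg : ContDiff ℝ 1 g)
    (hlim_top : Tendsto (fun u => g u * Real.exp (-u ^ 2 / 2) * normHermite (k + 1) u)
      atTop (nhds 0))
    (hlim_bot : Tendsto (fun u => g u * Real.exp (-u ^ 2 / 2) * normHermite (k + 1) u)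
      atBot (nhds 0))
    (hint1 : Integrable (fun u => g u * normHermite k u * Real.exp (-u ^ 2 / 2)))
    (hint2 : Integrable
      (fun u => (deriv g u - u * g u) * normHermite (k + 1) u * Real.exp (-u ^ 2 / 2))) :
    ∫ u : ℝ, g u * normHermite k u * Real.exp (-u ^ 2 / 2)
      = -(Real.sqrt (2 * k + 2))⁻¹
        * ∫ u : ℝ, (deriv g u - u * g u) * normHermite (k + 1) u
            * Real.exp (-u ^ 2 / 2) := by
  set c : ℝ := Real.sqrt (2 * k + 2) with hc
  have hcpos : 0 < c := Real.sqrt_pos.mpr (by positivity)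
  set Φ : ℝ → ℝ := fun u => g u * Real.exp (-u ^ 2 / 2) * normHermite (k + 1) u with hΦdef
  set Φ' : ℝ → ℝ := fun u =>
    (deriv g u - u * g u) * normHermite (k + 1) u * Real.exp (-u ^ 2 / 2)
      + c * (g u * normHermite k u * Real.exp (-u ^ 2 / 2)) with hΦ'def
  have hΦ : ∀ u : ℝ, HasDerivAt Φ (Φ' u) u := by
    intro u
    have hg' : HasDerivAt g (deriv g u) u :=
      ((hg.differentiable one_ne_zero) u).hasDerivAt
    have hE : HasDerivAt (fun u : ℝ => Real.exp (-u ^ 2 / 2))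
        (Real.exp (-u ^ 2 / 2) * (-u)) u := by
      have h1 := ((hasDerivAt_pow 2 u).neg.div_const 2).exp
      refine h1.congr_deriv ?_
      simp only [Pi.neg_apply]
      push_cast
      ring
    have hN := hasDerivAt_normHermite k u
    have := (hg'.mul hE).mul hN
    refine this.congr_deriv ?_
    simp only [hΦ'def, Pi.mul_apply, hc]
    ring
  have hΦ'int : Integrable Φ' := hint2.add (hint1.const_mul c)
  have hIoi : ∫ x in Set.Ioi (0 : ℝ), Φ' x = 0 - Φ 0 :=
    integral_Ioi_of_hasDerivAt_of_tendsto' (fun x _ => hΦ x)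
      hΦ'int.integrableOn hlim_top
  have hIic : ∫ x in Set.Iic (0 : ℝ), Φ' x = Φ 0 - 0 :=
    integral_Iic_of_hasDerivAt_of_tendsto' (fun x _ => hΦ x)
      hΦ'int.integrableOn hlim_bot
  have htot : ∫ x : ℝ, Φ' x = 0 := by
    rw [← intervalIntegral.integral_Iic_add_Ioi (b := (0:ℝ)) hΦ'int.integrableOn hΦ'int.integrableOn,
      hIoi, hIic]
    ring
  have hsplit : ∫ x : ℝ, Φ' x
      = (∫ u : ℝ, (deriv g u - u * g u) * normHermite (k + 1) u * Real.exp (-u ^ 2 / 2))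
        + c * ∫ u : ℝ, g u * normHermite k u * Real.exp (-u ^ 2 / 2) := by
    rw [hΦ'def]
    rw [integral_add hint2 (hint1.const_mul c), integral_const_mul]
  rw [hsplit] at htot
  have hcne : c ≠ 0 := ne_of_gt hcpos
  apply mul_left_cancel₀ hcne
  rw [← mul_assoc, mul_neg, mul_inv_cancel₀ hcne]
  linarith [htot]
end

section
/- Let M and k be natural numbers. Then ∫_ℝ u^M · H_k(u) · e^{−u²} du equals √π · 2^{k−M} · M!/(((M−k)/2)!) if k ≤ M and M − k is even, and equals 0 if k > M or M − k is odd, where H_k is the physicists' Hermite polynomial of degree k. -/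
open MeasureTheory

section AuxHermite
open Polynomial Real

noncomputable def hermP : ℕ → Polynomial ℝ
  | 0 => 1
  | k + 1 => derivative (hermP k) - C 2 * X * hermP k

noncomputable def Gfun (k : ℕ) : ℝ → ℝ := fun x => aeval x (hermP k) * Real.exp (-x ^ 2)

lemma hasDerivAt_gauss (x : ℝ) :
    HasDerivAt (fun y : ℝ => Real.exp (-y ^ 2)) (-2 * x * Real.exp (-x ^ 2)) x := by
  have h : HasDerivAt (fun y : ℝ => -y ^ 2) (-(2 * x)) x := by
    simpa using ((hasDerivAt_pow 2 x).fun_neg)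
  simpa [mul_comm, neg_mul] using h.exp

lemma hasDerivAt_Gfun (k : ℕ) (x : ℝ) : HasDerivAt (Gfun k) (Gfun (k + 1) x) x := by
  have h1 : HasDerivAt (fun y : ℝ => aeval y (hermP k)) (aeval x (derivative (hermP k))) x := by
    simpa [Polynomial.aeval_def, Polynomial.eval₂_eq_eval_map] using
      (Polynomial.hasDerivAt ((hermP k).map (algebraMap ℝ ℝ)) x)
  have := h1.fun_mul (hasDerivAt_gauss x)
  refine this.congr_deriv ?_
  simp [Gfun, hermP, map_sub, map_mul]
  ring

lemma iteratedDeriv_gauss (k : ℕ) :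
    iteratedDeriv k (fun y : ℝ => Real.exp (-y ^ 2)) = Gfun k := by
  induction k with
  | zero => funext x; simp [Gfun, hermP]
  | succ n ih =>
      rw [iteratedDeriv_succ, ih]
      funext x
      exact (hasDerivAt_Gfun n x).deriv

lemma physHermite_eq_s11 (k : ℕ) (x : ℝ) :
    (-1 : ℝ) ^ k * Real.exp (x ^ 2) * iteratedDeriv k (fun y => Real.exp (-y ^ 2)) x
      = (-1 : ℝ) ^ k * aeval x (hermP k) := by
  rw [iteratedDeriv_gauss]
  have : Real.exp (x ^ 2) * Real.exp (-x ^ 2) = 1 := by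
    rw [← Real.exp_add]; simp
  unfold Gfun
  calc (-1:ℝ)^k * Real.exp (x^2) * (aeval x (hermP k) * Real.exp (-x^2))
      = (-1:ℝ)^k * aeval x (hermP k) * (Real.exp (x^2) * Real.exp (-x^2)) := by ring
    _ = (-1:ℝ)^k * aeval x (hermP k) := by rw [this, mul_one]

lemma integrable_pow_gauss (n : ℕ) :
    Integrable (fun x : ℝ => x ^ n * Real.exp (-x ^ 2)) := by
  have := integrable_rpow_mul_exp_neg_mul_sq (b := 1) one_pos
    (s := (n : ℝ)) (lt_of_lt_of_le neg_one_lt_zero (Nat.cast_nonneg n))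
  simpa [Real.rpow_natCast] using this

lemma integrable_poly_gauss (p : Polynomial ℝ) :
    Integrable (fun x : ℝ => aeval x p * Real.exp (-x ^ 2)) := by
  induction p using Polynomial.induction_on' with
  | add p q hp hq => simpa [add_mul, Pi.add_def] using hp.add hq
  | monomial n a =>
      simpa [Polynomial.aeval_monomial, mul_assoc] using
        ((integrable_pow_gauss n).const_mul a)

lemma gm_zero : ∫ x : ℝ, x ^ 0 * Real.exp (-x ^ 2) = Real.sqrt Real.pi := by
  simpa using integral_gaussian 1

lemma gm_odd (n : ℕ) (hn : Odd n) : ∫ x : ℝ, x ^ n * Real.exp (-x ^ 2) = 0 := by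
  have h : ∫ x : ℝ, ((fun x : ℝ => x ^ n * Real.exp (-x ^ 2)) (-x))
      = ∫ x : ℝ, x ^ n * Real.exp (-x ^ 2) :=
    integral_neg_eq_self (fun x : ℝ => x ^ n * Real.exp (-x ^ 2)) volume
  have h2 : ∀ x : ℝ, ((fun x : ℝ => x ^ n * Real.exp (-x ^ 2)) (-x))
      = -(x ^ n * Real.exp (-x ^ 2)) := by
    intro x; simp only [hn.neg_pow, neg_sq]; ring
  simp only [h2] at h
  rw [integral_neg] at h
  linarith

lemma gm_rec (n : ℕ) :
    ∫ x : ℝ, x ^ (n + 2) * Real.exp (-x ^ 2)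
      = ((n : ℝ) + 1) / 2 * ∫ x : ℝ, x ^ n * Real.exp (-x ^ 2) := by
  have hu : ∀ x : ℝ, HasDerivAt (fun y : ℝ => y ^ (n + 1)) (((n : ℝ) + 1) * x ^ n) x := by
    intro x; simpa using hasDerivAt_pow (n + 1) x
  have hparts := MeasureTheory.integral_mul_deriv_eq_deriv_mul_of_integrable
    (u := fun x : ℝ => x ^ (n + 1)) (u' := fun x : ℝ => ((n : ℝ) + 1) * x ^ n)
    (v := fun x : ℝ => Real.exp (-x ^ 2)) (v' := fun x : ℝ => -2 * x * Real.exp (-x ^ 2))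
    (fun x _ => hu x) (fun x _ => hasDerivAt_gauss x)
    (by
      apply ((integrable_pow_gauss (n + 2)).const_mul (-2)).congr
      filter_upwards with x
      simp only [Pi.mul_apply]; ring)
    (by
      apply ((integrable_pow_gauss n).const_mul ((n : ℝ) + 1)).congr
      filter_upwards with x
      simp only [Pi.mul_apply]; ring)
    (by
      apply (integrable_pow_gauss (n + 1)).congr
      filter_upwards with x
      simp only [Pi.mul_apply])
  have lhs : ∫ x : ℝ, x ^ (n + 1) * (-2 * x * Real.exp (-x ^ 2))
      = -2 * ∫ x : ℝ, x ^ (n + 2) * Real.exp (-x ^ 2) := by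
    rw [← integral_const_mul]
    congr 1; funext x; ring
  have rhs : ∫ x : ℝ, ((n : ℝ) + 1) * x ^ n * Real.exp (-x ^ 2)
      = ((n : ℝ) + 1) * ∫ x : ℝ, x ^ n * Real.exp (-x ^ 2) := by
    rw [← integral_const_mul]
    congr 1; funext x; ring
  rw [lhs, rhs] at hparts
  linarith [hparts]

lemma gm_even (m : ℕ) :
    ∫ x : ℝ, x ^ (2 * m) * Real.exp (-x ^ 2)
      = Real.sqrt Real.pi * ((2 * m).factorial : ℝ) / (4 ^ m * (m.factorial : ℝ)) := by
  induction m with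
  | zero => simpa using gm_zero
  | succ m ih =>
      have h2 : 2 * (m + 1) = 2 * m + 2 := by ring
      rw [h2, gm_rec, ih]
      have hm : (m.factorial : ℝ) ≠ 0 := Nat.cast_ne_zero.2 m.factorial_ne_zero
      have h4 : (4 : ℝ) ^ m ≠ 0 := by positivity
      rw [show (2 * m + 2).factorial = (2 * m + 2) * ((2 * m + 1) * (2 * m).factorial) by
        rw [show 2 * m + 2 = 2 * m + 1 + 1 by ring, Nat.factorial_succ, Nat.factorial_succ]]
      rw [Nat.factorial_succ]
      push_cast
      field_simp
      ring

lemma integrable_pow_G (j k : ℕ) :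
    Integrable (fun x : ℝ => x ^ j * Gfun k x) := by
  have := integrable_poly_gauss (X ^ j * hermP k)
  apply this.congr
  filter_upwards with x
  simp [Gfun, mul_assoc]

lemma step0 (k : ℕ) : ∫ x : ℝ, Gfun (k + 1) x = 0 := by
  have hparts := MeasureTheory.integral_mul_deriv_eq_deriv_mul_of_integrable
    (u := fun _ : ℝ => (1 : ℝ)) (u' := fun _ : ℝ => (0 : ℝ))
    (v := Gfun k) (v' := Gfun (k + 1))
    (fun x _ => hasDerivAt_const x 1) (fun x _ => hasDerivAt_Gfun k x)
    (by
      apply (integrable_poly_gauss (hermP (k + 1))).congr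
      filter_upwards with x
      simp [Gfun])
    (by
      apply (integrable_zero _ _ (volume : Measure ℝ)).congr
      filter_upwards with x
      simp)
    (by
      apply (integrable_poly_gauss (hermP k)).congr
      filter_upwards with x
      simp [Gfun])
  simpa using hparts

lemma step (M k : ℕ) :
    ∫ x : ℝ, x ^ (M + 1) * Gfun (k + 1) x
      = -((M : ℝ) + 1) * ∫ x : ℝ, x ^ M * Gfun k x := by
  have hu : ∀ x : ℝ, HasDerivAt (fun y : ℝ => y ^ (M + 1)) (((M : ℝ) + 1) * x ^ M) x := by
    intro x; simpa using hasDerivAt_pow (M + 1) x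
  have hparts := MeasureTheory.integral_mul_deriv_eq_deriv_mul_of_integrable
    (u := fun x : ℝ => x ^ (M + 1)) (u' := fun x : ℝ => ((M : ℝ) + 1) * x ^ M)
    (v := Gfun k) (v' := Gfun (k + 1))
    (fun x _ => hu x) (fun x _ => hasDerivAt_Gfun k x)
    (by
      apply (integrable_pow_G (M + 1) (k + 1)).congr
      filter_upwards with x
      simp only [Pi.mul_apply])
    (by
      apply ((integrable_pow_G M k).const_mul ((M : ℝ) + 1)).congr
      filter_upwards with x
      simp only [Pi.mul_apply]; ring)
    (by
      apply (integrable_pow_G (M + 1) k).congr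
      filter_upwards with x
      simp only [Pi.mul_apply])
  rw [hparts, ← integral_const_mul, neg_eq_iff_eq_neg, ← integral_neg]
  congr 1; funext x; ring

lemma mainG (k : ℕ) : ∀ M : ℕ,
    ∫ x : ℝ, x ^ M * Gfun k x
      = (-1 : ℝ) ^ k * (M.descFactorial k : ℝ) * ∫ x : ℝ, x ^ (M - k) * Real.exp (-x ^ 2) := by
  induction k with
  | zero => intro M; simp [Gfun, hermP]
  | succ k ih =>
      intro M
      cases M with
      | zero =>
          simp only [pow_zero, one_mul]
          rw [step0 k]
          simp
      | succ M =>
          rw [step M k, ih M, Nat.succ_descFactorial_succ, Nat.succ_sub_succ]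
          push_cast
          ring

lemma main_integral (M k : ℕ) :
    ∫ u : ℝ, u ^ M * physHermite k u * Real.exp (-u ^ 2)
      = (M.descFactorial k : ℝ) * ∫ x : ℝ, x ^ (M - k) * Real.exp (-x ^ 2) := by
  have h1 : ∀ u : ℝ, u ^ M * physHermite k u * Real.exp (-u ^ 2)
      = (-1 : ℝ) ^ k * (u ^ M * Gfun k u) := by
    intro u
    rw [physHermite, physHermite_eq_s11, Gfun]
    ring
  simp only [h1]
  rw [integral_const_mul, mainG k M, ← mul_assoc, ← mul_assoc, ← mul_pow]
  norm_num


end AuxHermite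

/-- Gaussian–Hermite moment integral: `∫ u^M H_k(u) e^{−u²} du` equals
`√π 2^{k−M} M!/(((M−k)/2)!)` if `k ≤ M` and `M − k` is even, and `0` otherwise. -/
theorem stmt_11 (M k : ℕ) :
    (k ≤ M → Even (M - k) →
      ∫ u : ℝ, u ^ M * physHermite k u * Real.exp (-u ^ 2)
        = Real.sqrt Real.pi * (2 : ℝ) ^ ((k : ℤ) - (M : ℤ))
          * (M.factorial : ℝ) / (((M - k) / 2).factorial : ℝ)) ∧
    (M < k ∨ Odd (M - k) →
      ∫ u : ℝ, u ^ M * physHermite k u * Real.exp (-u ^ 2) = 0) := by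
  constructor
  · intro hkM hev
    obtain ⟨m, hm⟩ := hev
    have hm2 : M - k = 2 * m := by omega
    rw [main_integral, hm2, gm_even m]
    have hdiv : (M - k) / 2 = m := by omega
    rw [hm2] at hdiv
    have hfac : ((2 * m).factorial : ℝ) * (M.descFactorial k : ℝ) = (M.factorial : ℝ) := by
      rw [← Nat.cast_mul, ← hm2, Nat.factorial_mul_descFactorial hkM]
    have hzpow : (2 : ℝ) ^ ((k : ℤ) - (M : ℤ)) = ((4 : ℝ) ^ m)⁻¹ := by
      have hkm : (k : ℤ) - (M : ℤ) = -(2 * m : ℕ) := by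
        have : (M : ℤ) - k = (2 * m : ℕ) := by
          rw [← hm2]; push_cast [hkM]; omega
        omega
      rw [hkm, zpow_neg, zpow_natCast, pow_mul]
      norm_num
    rw [hzpow, hdiv]
    have hfm : (m.factorial : ℝ) ≠ 0 := Nat.cast_ne_zero.2 m.factorial_ne_zero
    have h4 : (4 : ℝ) ^ m ≠ 0 := by positivity
    field_simp
    linear_combination hfac
  · intro h
    rw [main_integral]
    rcases h with h | h
    · rw [Nat.descFactorial_eq_zero_iff_lt.2 h]
      simp
    · rw [gm_odd _ h, mul_zero]
end

section
/- Let (Y_i)_{i≥1} be i.i.d. real-valued random variables with E[|Y₁|^r] < ∞ for every r ≥ 1, and for each N set ζ_N := (1/N)·Σ_{i=1}^N Y_i − E[Y₁]. Then for every θ > 0 and every η > 0 there exist a constant C > 0 and N₀ ∈ ℕ such that for all N ≥ N₀: E[ ζ_N² · 1_{{ζ_N > θ}} ] ≤ C² / N^{η+1}. -/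
open MeasureTheory ProbabilityTheory
section Aux
open Finset

variable {Ω : Type*} [MeasurableSpace Ω] {P : Measure Ω} [IsProbabilityMeasure P]

lemma aux_abs_pow_le (x : ℝ) (j : ℕ) : |x| ^ j ≤ 1 + |x| ^ (j + 1) := by
  rcases le_or_gt (|x|) 1 with h | h
  · calc |x| ^ j ≤ 1 ^ j := pow_le_pow_left₀ (abs_nonneg x) h j
    _ = 1 := one_pow j
    _ ≤ 1 + |x| ^ (j+1) := le_add_of_nonneg_right (by positivity)
  · have : |x| ^ j ≤ |x| ^ (j+1) := pow_le_pow_right₀ h.le (Nat.le_succ j)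
    linarith

lemma aux_integrable_abs_pow {f : Ω → ℝ} (hf : ∀ p : ℕ, MemLp f p P) (n : ℕ) :
    Integrable (fun ω => |f ω| ^ n) P := by
  rcases Nat.eq_zero_or_pos n with rfl | hn
  · simpa using integrable_const (1 : ℝ)
  · have h := (hf n).integrable_norm_rpow (by exact_mod_cast hn.ne') (by simp)
    simpa [Real.rpow_natCast, Real.norm_eq_abs] using h

lemma aux_integrable_pow {f : Ω → ℝ} (hf : ∀ p : ℕ, MemLp f p P) (n : ℕ) :
    Integrable (fun ω => f ω ^ n) P := by
  refine (aux_integrable_abs_pow hf n).mono' ((hf 1).aestronglyMeasurable.pow n) ?_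
  filter_upwards with ω
  simp [abs_pow]

lemma even_moment_bound (X : ℕ → Ω → ℝ) (hmeas : ∀ i, Measurable (X i))
    (hindep : iIndepFun X P)
    (hLp : ∀ i (p : ℕ), MemLp (X i) p P)
    (hmean : ∀ i, ∫ ω, X i ω ∂P = 0)
    (B : ℕ → ℝ) (hB : ∀ i m, ∫ ω, |X i ω| ^ m ∂P ≤ B m) (hB0 : ∀ m, 0 ≤ B m) :
    ∀ k : ℕ, ∃ M : ℝ, 0 < M ∧ ∀ k' ≤ k, ∀ N : ℕ,
      ∫ ω, (∑ i ∈ range N, X i ω) ^ (2 * k') ∂P ≤ M * ((N : ℝ) + 1) ^ k' := by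
  set S : ℕ → Ω → ℝ := fun N ω => ∑ i ∈ range N, X i ω with hS
  have hSLp : ∀ (N : ℕ) (p : ℕ), MemLp (S N) p P := fun N p =>
    memLp_finset_sum (range N) (fun i _ => hLp i p)
  have hSint : ∀ N j, Integrable (fun ω => S N ω ^ j) P :=
    fun N j => aux_integrable_pow (hSLp N) j
  have hXint : ∀ i j, Integrable (fun ω => X i ω ^ j) P :=
    fun i j => aux_integrable_pow (fun p => hLp i p) j
  have hXabs : ∀ i j, Integrable (fun ω => |X i ω| ^ j) P :=
    fun i j => aux_integrable_abs_pow (fun p => hLp i p) j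
  have hSabs : ∀ N j, Integrable (fun ω => |S N ω| ^ j) P :=
    fun N j => aux_integrable_abs_pow (hSLp N) j
  have habsint : ∀ f : Ω → ℝ, |∫ ω, f ω ∂P| ≤ ∫ ω, |f ω| ∂P := by
    intro f
    simpa [Real.norm_eq_abs] using norm_integral_le_integral_norm (μ := P) f
  have hXmom : ∀ i m, |∫ ω, X i ω ^ m ∂P| ≤ B m := by
    intro i m
    calc |∫ ω, X i ω ^ m ∂P| ≤ ∫ ω, |X i ω ^ m| ∂P := habsint _
    _ = ∫ ω, |X i ω| ^ m ∂P := by simp [abs_pow]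
    _ ≤ B m := hB i m
  intro k
  induction k with
  | zero =>
    refine ⟨1, one_pos, ?_⟩
    intro k' hk' N
    interval_cases k'
    simp
  | succ k IH =>
    obtain ⟨M, hM, hMle⟩ := IH
    -- uniform bound on intermediate moments
    have hmid : ∀ j, j ≤ 2 * k → ∀ N : ℕ,
        |∫ ω, S N ω ^ j ∂P| ≤ (1 + M) * ((N : ℝ) + 1) ^ k := by
      intro j hj N
      have hbase : (1 : ℝ) ≤ (N : ℝ) + 1 := le_add_of_nonneg_left (Nat.cast_nonneg N)
      have hpow : (1 : ℝ) ≤ ((N : ℝ) + 1) ^ k := one_le_pow₀ hbase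
      rcases Nat.even_or_odd j with ⟨k', hk'⟩ | ⟨k', hk'⟩
      · have hj2 : j = 2 * k' := by omega
        have hk'k : k' ≤ k := by omega
        have hnn : 0 ≤ ∫ ω, S N ω ^ j ∂P := by
          refine integral_nonneg fun ω => ?_
          rw [hj2, pow_mul]
          exact pow_nonneg (sq_nonneg _) _
        rw [abs_of_nonneg hnn]
        calc ∫ ω, S N ω ^ j ∂P ≤ M * ((N : ℝ) + 1) ^ k' := by
              rw [hj2]; exact hMle k' hk'k N
        _ ≤ M * ((N : ℝ) + 1) ^ k :=
              mul_le_mul_of_nonneg_left (pow_le_pow_right₀ hbase hk'k) hM.le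
        _ ≤ (1 + M) * ((N : ℝ) + 1) ^ k := by nlinarith
      · have hj2 : j = 2 * k' + 1 := hk'
        have hk'k : k' + 1 ≤ k := by omega
        calc |∫ ω, S N ω ^ j ∂P| ≤ ∫ ω, |S N ω ^ j| ∂P := habsint _
        _ = ∫ ω, |S N ω| ^ j ∂P := by simp [abs_pow]
        _ ≤ ∫ ω, (1 + S N ω ^ (2 * (k' + 1))) ∂P := by
            refine integral_mono (hSabs N j) ((integrable_const 1).add (hSint N _)) fun ω => ?_
            have h1 := aux_abs_pow_le (S N ω) j
            have h2 : |S N ω| ^ (j + 1) = S N ω ^ (2 * (k' + 1)) := by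
              have hj3 : j + 1 = 2 * (k' + 1) := by omega
              rw [hj3, pow_mul, pow_mul, sq_abs]
            rw [← h2]; simpa using h1
        _ = 1 + ∫ ω, S N ω ^ (2 * (k' + 1)) ∂P := by
            rw [integral_add (integrable_const 1) (hSint N _)]; simp
        _ ≤ 1 + M * ((N : ℝ) + 1) ^ (k' + 1) := by
            linarith [hMle (k' + 1) hk'k N]
        _ ≤ (1 + M) * ((N : ℝ) + 1) ^ k := by
            have h3 : ((N : ℝ) + 1) ^ (k' + 1) ≤ ((N : ℝ) + 1) ^ k :=
              pow_le_pow_right₀ hbase hk'k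
            nlinarith
    -- independence of partial sum and next increment
    have hSX : ∀ N : ℕ, IndepFun (S N) (X N) P := by
      intro N
      have h := hindep.indepFun_sum_range_succ hmeas N
      have he : (∑ j ∈ range N, X j) = S N := by ext ω; simp [hS]
      rwa [he] at h
    have hPow : ∀ (N j m : ℕ), IndepFun (fun ω => S N ω ^ j) (fun ω => X N ω ^ m) P :=
      fun N j m => (hSX N).comp (measurable_id.pow_const j) (measurable_id.pow_const m)
    set K := 2 * (k + 1) with hKdef
    set D : ℝ := ∑ j ∈ range (2 * k + 1), (K.choose j : ℝ) * ((1 + M) * B (K - j)) with hDdef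
    have hD0 : 0 ≤ D := by
      refine Finset.sum_nonneg fun j _ => ?_
      have := hB0 (K - j)
      positivity
    have hrec : ∀ N : ℕ, ∫ ω, S (N + 1) ω ^ K ∂P ≤
        ∫ ω, S N ω ^ K ∂P + D * ((N : ℝ) + 1) ^ k := by
      intro N
      have hint : ∀ j m : ℕ, Integrable (fun ω => S N ω ^ j * X N ω ^ m * ((K.choose j : ℕ) : ℝ)) P :=
        fun j m => ((hPow N j m).integrable_mul (hSint N j) (hXint N m)).mul_const _
      have step1 : ∫ ω, S (N + 1) ω ^ K ∂P =
          ∑ j ∈ range (K + 1), (∫ ω, S N ω ^ j ∂P) * (∫ ω, X N ω ^ (K - j) ∂P) *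
            ((K.choose j : ℕ) : ℝ) := by
        have e1 : ∀ ω, S (N + 1) ω ^ K =
            ∑ j ∈ range (K + 1), S N ω ^ j * X N ω ^ (K - j) * ((K.choose j : ℕ) : ℝ) := by
          intro ω
          have : S (N + 1) ω = S N ω + X N ω := by simp [hS, Finset.sum_range_succ]
          rw [this, add_pow]
        calc ∫ ω, S (N + 1) ω ^ K ∂P
            = ∫ ω, ∑ j ∈ range (K + 1), S N ω ^ j * X N ω ^ (K - j) *
                ((K.choose j : ℕ) : ℝ) ∂P := by
              exact integral_congr_ae (Filter.Eventually.of_forall e1)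
          _ = ∑ j ∈ range (K + 1), ∫ ω, S N ω ^ j * X N ω ^ (K - j) *
                ((K.choose j : ℕ) : ℝ) ∂P :=
              integral_finset_sum _ (fun j _ => hint j (K - j))
          _ = ∑ j ∈ range (K + 1), (∫ ω, S N ω ^ j ∂P) * (∫ ω, X N ω ^ (K - j) ∂P) *
                ((K.choose j : ℕ) : ℝ) := by
              refine Finset.sum_congr rfl fun j _ => ?_
              rw [integral_mul_const]
              congr 1
              exact (hPow N j (K - j)).integral_fun_mul_eq_mul_integral (hSint N j).aestronglyMeasurable
                (hXint N (K - j)).aestronglyMeasurable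
      have hsplit : K + 1 = (2 * k + 1) + 1 + 1 := by omega
      rw [step1, hsplit, Finset.sum_range_succ, Finset.sum_range_succ]
      have hlast : (∫ ω, S N ω ^ (2 * k + 1 + 1) ∂P) * (∫ ω, X N ω ^ (K - (2 * k + 1 + 1)) ∂P) *
          ((K.choose (2 * k + 1 + 1) : ℕ) : ℝ) = ∫ ω, S N ω ^ K ∂P := by
        have h1 : K - (2 * k + 1 + 1) = 0 := by omega
        have h2 : (2 : ℕ) * k + 1 + 1 = K := by omega
        rw [h1, h2]
        simp
      have hpen : (∫ ω, S N ω ^ (2 * k + 1) ∂P) * (∫ ω, X N ω ^ (K - (2 * k + 1)) ∂P) *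
          ((K.choose (2 * k + 1) : ℕ) : ℝ) = 0 := by
        have h1 : K - (2 * k + 1) = 1 := by omega
        rw [h1]
        simp [hmean N]
      rw [hlast, hpen, add_zero]
      have hmain : ∑ j ∈ range (2 * k + 1), (∫ ω, S N ω ^ j ∂P) * (∫ ω, X N ω ^ (K - j) ∂P) *
          ((K.choose j : ℕ) : ℝ) ≤ D * ((N : ℝ) + 1) ^ k := by
        rw [hDdef, Finset.sum_mul]
        refine Finset.sum_le_sum fun j hj => ?_
        have hjk : j ≤ 2 * k := by
          have := Finset.mem_range.mp hj; omega
        have h1 := hmid j hjk N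
        have h2 := hXmom N (K - j)
        have hq : (0 : ℝ) < ((N : ℝ) + 1) ^ k := by positivity
        have hc : (0 : ℝ) ≤ ((K.choose j : ℕ) : ℝ) := Nat.cast_nonneg _
        calc (∫ ω, S N ω ^ j ∂P) * (∫ ω, X N ω ^ (K - j) ∂P) * ((K.choose j : ℕ) : ℝ)
            ≤ |(∫ ω, S N ω ^ j ∂P) * (∫ ω, X N ω ^ (K - j) ∂P)| * ((K.choose j : ℕ) : ℝ) :=
              mul_le_mul_of_nonneg_right (le_abs_self _) hc
          _ = |∫ ω, S N ω ^ j ∂P| * |∫ ω, X N ω ^ (K - j) ∂P| * ((K.choose j : ℕ) : ℝ) := by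
              rw [abs_mul]
          _ ≤ ((1 + M) * ((N : ℝ) + 1) ^ k) * B (K - j) * ((K.choose j : ℕ) : ℝ) := by
              have hBnn := hB0 (K - j)
              refine mul_le_mul_of_nonneg_right (mul_le_mul h1 h2 (abs_nonneg _) ?_) hc
              positivity
          _ = (K.choose j : ℝ) * ((1 + M) * B (K - j)) * ((N : ℝ) + 1) ^ k := by ring
      linarith
    -- cumulative bound
    have hcum : ∀ N : ℕ, ∫ ω, S N ω ^ K ∂P ≤ (D + M + 1) * ((N : ℝ) + 1) ^ (k + 1) := by
      intro N
      induction N with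
      | zero =>
        have : ∀ ω, S 0 ω ^ K = 0 := by
          intro ω
          simp [hS, hKdef]
        rw [integral_congr_ae (Filter.Eventually.of_forall this)]
        simp
        positivity
      | succ N IHN =>
        have h1 := hrec N
        have hb : (0 : ℝ) ≤ (N : ℝ) + 1 := by positivity
        have h2 : ((N : ℝ) + 1) ^ (k + 1) = ((N : ℝ) + 1) ^ k * ((N : ℝ) + 1) := pow_succ _ _
        have h3 : (((N : ℕ) + 1 : ℕ) : ℝ) + 1 = (N : ℝ) + 2 := by push_cast; ring
        rw [h3]
        have h4 : ((N : ℝ) + 1) ^ k ≤ ((N : ℝ) + 2) ^ k :=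
          pow_le_pow_left₀ hb (by linarith) k
        have h5 : ((N : ℝ) + 2) ^ (k + 1) = ((N : ℝ) + 2) ^ k * ((N : ℝ) + 2) := pow_succ _ _
        have hqq : (0 : ℝ) < ((N : ℝ) + 1) ^ k := by positivity
        calc ∫ ω, S (N + 1) ω ^ K ∂P ≤ ∫ ω, S N ω ^ K ∂P + D * ((N : ℝ) + 1) ^ k := h1
          _ ≤ (D + M + 1) * ((N : ℝ) + 1) ^ (k + 1) + D * ((N : ℝ) + 1) ^ k := by linarith
          _ = (D + M + 1) * (((N : ℝ) + 1) ^ k * ((N : ℝ) + 1)) + D * ((N : ℝ) + 1) ^ k := by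
              rw [h2]
          _ ≤ (D + M + 1) * (((N : ℝ) + 1) ^ k * ((N : ℝ) + 1)) + (D + M + 1) * ((N : ℝ) + 1) ^ k := by
              nlinarith
          _ = (D + M + 1) * (((N : ℝ) + 1) ^ k * ((N : ℝ) + 2)) := by ring
          _ ≤ (D + M + 1) * (((N : ℝ) + 2) ^ k * ((N : ℝ) + 2)) := by
              gcongr <;> linarith
          _ = (D + M + 1) * ((N : ℝ) + 2) ^ (k + 1) := by rw [h5]
    refine ⟨M + D + 1, by linarith, ?_⟩
    intro k' hk' N
    rcases Nat.lt_or_ge k' (k + 1) with h | h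
    · have hk'' : k' ≤ k := by omega
      calc ∫ ω, (∑ i ∈ range N, X i ω) ^ (2 * k') ∂P ≤ M * ((N : ℝ) + 1) ^ k' := hMle k' hk'' N
        _ ≤ (M + D + 1) * ((N : ℝ) + 1) ^ k' := by
            have : (0 : ℝ) < ((N : ℝ) + 1) ^ k' := by positivity
            nlinarith
    · have hk'' : k' = k + 1 := by omega
      subst hk''
      have := hcum N
      calc ∫ ω, (∑ i ∈ range N, X i ω) ^ (2 * (k + 1)) ∂P
          ≤ (D + M + 1) * ((N : ℝ) + 1) ^ (k + 1) := this
        _ = (M + D + 1) * ((N : ℝ) + 1) ^ (k + 1) := by ring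

end Aux

/-- Tail-moment concentration for empirical means of i.i.d. variables with all
moments finite: `E[ζ_N² 1_{ζ_N > θ}] ≤ C²/N^{η+1}` for `N` large, where
`ζ_N = (1/N) Σ_{i<N} Y_i − E[Y₀]`. -/
theorem stmt_16 {Ω : Type*} [MeasurableSpace Ω] (P : Measure Ω) [IsProbabilityMeasure P]
    (Y : ℕ → Ω → ℝ) (hmeas : ∀ i, Measurable (Y i))
    (hindep : iIndepFun Y P)
    (hident : ∀ i, IdentDistrib (Y i) (Y 0) P P)
    (hmom : ∀ r : ℝ, 1 ≤ r → MemLp (Y 0) (ENNReal.ofReal r) P)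
    (ζ : ℕ → Ω → ℝ)
    (hζ : ∀ N ω, ζ N ω = (1 / (N : ℝ)) * ∑ i ∈ Finset.range N, Y i ω - ∫ ω', Y 0 ω' ∂P) :
    ∀ θ : ℝ, 0 < θ → ∀ η : ℝ, 0 < η → ∃ C : ℝ, 0 < C ∧ ∃ N₀ : ℕ, ∀ N : ℕ, N₀ ≤ N →
      ∫ ω in {ω | θ < ζ N ω}, (ζ N ω) ^ 2 ∂P ≤ C ^ 2 / (N : ℝ) ^ (η + 1) := by
  intro θ hθ η hη
  set μY : ℝ := ∫ ω', Y 0 ω' ∂P with hμY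
  set X : ℕ → Ω → ℝ := fun i ω => Y i ω - μY with hX
  have hXmeas : ∀ i, Measurable (X i) := fun i => (hmeas i).sub measurable_const
  have hXindep : iIndepFun X P :=
    hindep.comp (fun _ => fun x => x - μY) (fun _ => measurable_id.sub measurable_const)
  have hYLp : ∀ i (p : ℕ), MemLp (Y i) p P := by
    intro i p
    rcases Nat.eq_zero_or_pos p with rfl | hp
    · simpa [memLp_zero_iff_aestronglyMeasurable] using (hmeas i).aestronglyMeasurable
    · have h0 : MemLp (Y 0) p P := by
        have := hmom p (by exact_mod_cast hp)
        rwa [ENNReal.ofReal_natCast] at this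
      exact (hident i).memLp_iff.mpr h0
  have hXLp : ∀ i (p : ℕ), MemLp (X i) p P := fun i p =>
    (hYLp i p).sub (memLp_const μY)
  have hXident : ∀ i, IdentDistrib (X i) (X 0) P P := fun i =>
    (hident i).comp (measurable_id.sub measurable_const)
  have hXmean : ∀ i, ∫ ω, X i ω ∂P = 0 := by
    intro i
    have hYi : Integrable (Y i) P := memLp_one_iff_integrable.mp (by exact_mod_cast hYLp i 1)
    have : ∫ ω, X i ω ∂P = (∫ ω, Y i ω ∂P) - μY := by
      simp only [hX]
      rw [integral_sub hYi (integrable_const μY), integral_const]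
      simp
    rw [this, (hident i).integral_eq, hμY, sub_self]
  set B : ℕ → ℝ := fun m => ∫ ω, |X 0 ω| ^ m ∂P with hBdef
  have hB : ∀ i m, ∫ ω, |X i ω| ^ m ∂P ≤ B m := by
    intro i m
    have : IdentDistrib (fun ω => |X i ω| ^ m) (fun ω => |X 0 ω| ^ m) P P :=
      (hXident i).comp ((measurable_id.abs).pow_const m)
    rw [this.integral_eq]
  have hB0 : ∀ m, 0 ≤ B m := fun m => integral_nonneg fun ω => by positivity
  set κ : ℕ := ⌈η⌉₊ with hκ
  obtain ⟨M, hM, hMle⟩ := even_moment_bound X hXmeas hXindep hXLp hXmean B hB hB0 (κ + 1)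
  set E : ℝ := M * 2 ^ (κ + 1) / θ ^ (2 * κ) with hE
  have hEpos : 0 < E := by positivity
  refine ⟨Real.sqrt E + 1, by positivity, 1, ?_⟩
  intro N hN
  have hN0 : (0 : ℝ) < N := by exact_mod_cast hN
  have hN1 : (1 : ℝ) ≤ N := by exact_mod_cast hN
  have hζg : ζ N = fun ω => (N : ℝ)⁻¹ * ∑ i ∈ Finset.range N, X i ω := by
    funext ω
    rw [hζ N ω, hX]
    rw [Finset.sum_sub_distrib, Finset.sum_const, Finset.card_range, nsmul_eq_mul]
    field_simp
  -- MemLp and integrability for ζ N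
  have hζLp : ∀ p : ℕ, MemLp (ζ N) p P := by
    intro p
    rw [hζg]
    exact (memLp_finset_sum (Finset.range N) (fun i _ => hXLp i p)).const_mul _
  have hint2 : Integrable (fun ω => ζ N ω ^ 2) P := aux_integrable_pow hζLp 2
  have hint2k : Integrable (fun ω => ζ N ω ^ (2 * (κ + 1))) P := aux_integrable_pow hζLp _
  have hζmeas : Measurable (ζ N) := by
    rw [hζg]
    exact (Finset.measurable_sum _ (fun i _ => hXmeas i)).const_mul _
  have hAmeas : MeasurableSet {ω | θ < ζ N ω} := measurableSet_lt measurable_const hζmeas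
  -- Step A/B: tail integral bounded by full high moment
  have stepA : ∫ ω in {ω | θ < ζ N ω}, (ζ N ω) ^ 2 ∂P ≤
      ∫ ω, ζ N ω ^ (2 * (κ + 1)) / θ ^ (2 * κ) ∂P := by
    calc ∫ ω in {ω | θ < ζ N ω}, (ζ N ω) ^ 2 ∂P
        ≤ ∫ ω in {ω | θ < ζ N ω}, ζ N ω ^ (2 * (κ + 1)) / θ ^ (2 * κ) ∂P := by
          refine setIntegral_mono_on hint2.integrableOn
            (hint2k.div_const _).integrableOn hAmeas fun ω hω => ?_
          have hω' : θ < ζ N ω := hω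
          rw [le_div_iff₀ (by positivity)]
          calc ζ N ω ^ 2 * θ ^ (2 * κ) ≤ ζ N ω ^ 2 * ζ N ω ^ (2 * κ) := by
                refine mul_le_mul_of_nonneg_left ?_ (sq_nonneg _)
                exact pow_le_pow_left₀ hθ.le hω'.le _
            _ = ζ N ω ^ (2 * (κ + 1)) := by
                rw [show 2 * (κ + 1) = 2 + 2 * κ by ring, pow_add]
      _ ≤ ∫ ω, ζ N ω ^ (2 * (κ + 1)) / θ ^ (2 * κ) ∂P := by
          refine setIntegral_le_integral (hint2k.div_const _) ?_
          filter_upwards with ω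
          have : 0 ≤ ζ N ω ^ (2 * (κ + 1)) := by
            rw [pow_mul]; exact pow_nonneg (sq_nonneg _) _
          positivity
  -- Step C: compute the full moment
  have stepC : ∫ ω, ζ N ω ^ (2 * (κ + 1)) / θ ^ (2 * κ) ∂P ≤ E / (N : ℝ) ^ (κ + 1) := by
    have e1 : ∫ ω, ζ N ω ^ (2 * (κ + 1)) ∂P =
        ((N : ℝ)⁻¹) ^ (2 * (κ + 1)) * ∫ ω, (∑ i ∈ Finset.range N, X i ω) ^ (2 * (κ + 1)) ∂P := by
      rw [hζg]
      simp_rw [mul_pow]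
      rw [integral_const_mul]
    have e2 := hMle (κ + 1) le_rfl N
    have hNpow : ((N : ℝ) + 1) ^ (κ + 1) ≤ 2 ^ (κ + 1) * (N : ℝ) ^ (κ + 1) := by
      rw [← mul_pow]
      exact pow_le_pow_left₀ (by positivity) (by linarith) _
    have key : ∫ ω, ζ N ω ^ (2 * (κ + 1)) ∂P ≤ M * 2 ^ (κ + 1) / (N : ℝ) ^ (κ + 1) := by
      rw [e1]
      have h3 : ((N : ℝ)⁻¹) ^ (2 * (κ + 1)) * (M * (((N : ℝ) + 1) ^ (κ + 1))) ≤
          M * 2 ^ (κ + 1) / (N : ℝ) ^ (κ + 1) := by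
        have hNN : ((N : ℝ)) ^ (κ + 1) * ((N : ℝ)⁻¹) ^ (κ + 1) = 1 := by
          rw [← mul_pow, mul_inv_cancel₀ (by positivity), one_pow]
        rw [show (2 : ℕ) * (κ + 1) = (κ + 1) + (κ + 1) by ring, pow_add]
        rw [div_eq_mul_inv, ← inv_pow]
        calc ((N : ℝ)⁻¹) ^ (κ + 1) * ((N : ℝ)⁻¹) ^ (κ + 1) * (M * ((N : ℝ) + 1) ^ (κ + 1))
            ≤ ((N : ℝ)⁻¹) ^ (κ + 1) * ((N : ℝ)⁻¹) ^ (κ + 1) * (M * (2 ^ (κ + 1) * (N : ℝ) ^ (κ + 1))) := by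
              refine mul_le_mul_of_nonneg_left ?_ (by positivity)
              exact mul_le_mul_of_nonneg_left hNpow hM.le
          _ = M * 2 ^ (κ + 1) * (((N : ℝ)) ^ (κ + 1) * ((N : ℝ)⁻¹) ^ (κ + 1)) * ((N : ℝ)⁻¹) ^ (κ + 1) := by
              ring
          _ = M * 2 ^ (κ + 1) * ((N : ℝ)⁻¹) ^ (κ + 1) := by
              rw [hNN]; ring
      calc ((N : ℝ)⁻¹) ^ (2 * (κ + 1)) * ∫ ω, (∑ i ∈ Finset.range N, X i ω) ^ (2 * (κ + 1)) ∂P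
          ≤ ((N : ℝ)⁻¹) ^ (2 * (κ + 1)) * (M * ((N : ℝ) + 1) ^ (κ + 1)) :=
            mul_le_mul_of_nonneg_left e2 (by positivity)
        _ ≤ M * 2 ^ (κ + 1) / (N : ℝ) ^ (κ + 1) := h3
    rw [integral_div]
    rw [hE, div_le_div_iff₀ (by positivity : (0:ℝ) < θ ^ (2 * κ)) (by positivity : (0:ℝ) < (N : ℝ) ^ (κ + 1))]
    calc (∫ ω, ζ N ω ^ (2 * (κ + 1)) ∂P) * (N : ℝ) ^ (κ + 1)
        ≤ (M * 2 ^ (κ + 1) / (N : ℝ) ^ (κ + 1)) * (N : ℝ) ^ (κ + 1) :=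
          mul_le_mul_of_nonneg_right key (by positivity)
      _ = M * 2 ^ (κ + 1) := by field_simp
      _ = M * 2 ^ (κ + 1) / θ ^ (2 * κ) * θ ^ (2 * κ) := by field_simp
  -- conclude with the rpow comparison
  have hrpow : (N : ℝ) ^ (η + 1) ≤ (N : ℝ) ^ (κ + 1 : ℕ) := by
    rw [← Real.rpow_natCast (N : ℝ) (κ + 1)]
    refine Real.rpow_le_rpow_of_exponent_le hN1 ?_
    push_cast
    have := Nat.le_ceil η
    linarith
  have hrpow0 : (0 : ℝ) < (N : ℝ) ^ (η + 1) := Real.rpow_pos_of_pos hN0 _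
  have hC2 : E ≤ (Real.sqrt E + 1) ^ 2 := by
    nlinarith [Real.sq_sqrt hEpos.le, Real.sqrt_nonneg E]
  calc ∫ ω in {ω | θ < ζ N ω}, (ζ N ω) ^ 2 ∂P
      ≤ E / (N : ℝ) ^ (κ + 1 : ℕ) := le_trans stepA stepC
    _ ≤ (Real.sqrt E + 1) ^ 2 / (N : ℝ) ^ (η + 1) :=
        div_le_div₀ (by positivity) hC2 hrpow0 hrpow
end
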